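/- Let θ ∈ [a,b] ⊆ ℝ with a < b, and suppose Z is a complex number satisfying |Z - exp(iθπ/(b-a))| < 1/2. Define f(θ) = sin(π/(b-a) · (θ - (a+b)/2)). If Im(exp(-i(a+b)π/(2(b-a))) · Z) ≤ 0 then θ ∈ [a, (a+2b)/3], and if Im(exp(-i(a+b)π/(2(b-a))) · Z) > 0 then θ ∈ [(2a+b)/3, b]. -/

import Mathlib

/-- Interval refinement via a noisy sample of `exp(iθπ/(b-a))`.
If `θ ∈ [a,b]`, `a < b`, and `|Z - exp(iθπ/(b-a))| < 1/2`, then the sign of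
`Im(exp(-i(a+b)π/(2(b-a))) · Z)` determines whether `θ ∈ [a,(a+2b)/3]`
or `θ ∈ [(2a+b)/3, b]`. -/
theorem stmt2 (a b θ : ℝ) (hab : a < b) (hθ : θ ∈ Set.Icc a b) (Z : ℂ)
    (hZ : ‖Z - Complex.exp (Complex.I * (θ * Real.pi / (b - a)))‖ < 1 / 2) :
    (((Complex.exp (-Complex.I * ((a + b) * Real.pi / (2 * (b - a)))) * Z).im ≤ 0 →
        θ ∈ Set.Icc a ((a + 2 * b) / 3)) ∧
     (0 < (Complex.exp (-Complex.I * ((a + b) * Real.pi / (2 * (b - a)))) * Z).im →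
        θ ∈ Set.Icc ((2 * a + b) / 3) b)) := by
  obtain ⟨ha, hb⟩ := hθ
  have hba : (0:ℝ) < b - a := by linarith
  have hπ := Real.pi_pos
  set x : ℝ := Real.pi / (b - a) * (θ - (a + b) / 2) with hx
  set w : ℂ := Complex.exp (-Complex.I * ((a + b) * Real.pi / (2 * (b - a)))) with hw
  have habs_w : ‖w‖ = 1 := by
    have h : -Complex.I * (((a:ℂ) + b) * Real.pi / (2 * ((b:ℂ) - a)))
        = ((-( (a + b) * Real.pi / (2 * (b - a)) ) : ℝ) : ℂ) * Complex.I := by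
      push_cast; ring
    rw [hw, h, Complex.norm_exp_ofReal_mul_I]
  have hprod : w * Complex.exp (Complex.I * (θ * Real.pi / (b - a)))
      = Complex.exp ((x : ℂ) * Complex.I) := by
    rw [hw, ← Complex.exp_add]
    congr 1
    have hba' : (b : ℂ) - a ≠ 0 := by
      simpa using sub_ne_zero.mpr (by exact_mod_cast hab.ne' : (b:ℂ) ≠ a)
    rw [hx]; push_cast
    field_simp
    ring
  have hkey : |(w * Z).im - Real.sin x| < 1 / 2 := by
    have h1 : (w * Z).im - Real.sin x = (w * Z - Complex.exp ((x : ℂ) * Complex.I)).im := by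
      simp [Complex.exp_ofReal_mul_I_im]
    have h2 : w * Z - Complex.exp ((x : ℂ) * Complex.I)
        = w * (Z - Complex.exp (Complex.I * (θ * Real.pi / (b - a)))) := by
      rw [mul_sub, hprod]
    calc |(w * Z).im - Real.sin x|
        = |(w * (Z - Complex.exp (Complex.I * (θ * Real.pi / (b - a))))).im| := by
          rw [h1, h2]
      _ ≤ ‖w * (Z - Complex.exp (Complex.I * (θ * Real.pi / (b - a))))‖ :=
          Complex.abs_im_le_norm _
      _ = ‖Z - Complex.exp (Complex.I * (θ * Real.pi / (b - a)))‖ := by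
          rw [norm_mul, habs_w, one_mul]
      _ < 1 / 2 := hZ
  have hxlo : -(Real.pi / 2) ≤ x := by
    rw [hx]
    rw [neg_le, ← mul_neg]
    have : -(θ - (a + b) / 2) ≤ (b - a) / 2 := by linarith
    calc Real.pi / (b - a) * -(θ - (a + b) / 2) ≤ Real.pi / (b - a) * ((b - a) / 2) :=
          mul_le_mul_of_nonneg_left this (by positivity)
      _ = Real.pi / 2 := by field_simp
  have hxhi : x ≤ Real.pi / 2 := by
    rw [hx]
    have : θ - (a + b) / 2 ≤ (b - a) / 2 := by linarith
    calc Real.pi / (b - a) * (θ - (a + b) / 2) ≤ Real.pi / (b - a) * ((b - a) / 2) :=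
          mul_le_mul_of_nonneg_left this (by positivity)
      _ = Real.pi / 2 := by field_simp
  constructor
  · intro him
    refine ⟨ha, ?_⟩
    by_contra hcon
    push_neg at hcon
    have hxgt : Real.pi / 6 < x := by
      rw [hx]
      have h6 : (b - a) / 6 < θ - (a + b) / 2 := by linarith
      calc Real.pi / 6 = Real.pi / (b - a) * ((b - a) / 6) := by field_simp
        _ < Real.pi / (b - a) * (θ - (a + b) / 2) :=
            mul_lt_mul_of_pos_left h6 (by positivity)
    have hmem1 : Real.pi / 6 ∈ Set.Icc (-(Real.pi / 2)) (Real.pi / 2) := by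
      constructor <;> nlinarith
    have hmem2 : x ∈ Set.Icc (-(Real.pi / 2)) (Real.pi / 2) := ⟨hxlo, hxhi⟩
    have := Real.strictMonoOn_sin hmem1 hmem2 hxgt
    rw [Real.sin_pi_div_six] at this
    have := abs_lt.mp hkey
    linarith [this.2]
  · intro him
    refine ⟨?_, hb⟩
    by_contra hcon
    push_neg at hcon
    have hxlt : x < -(Real.pi / 6) := by
      rw [hx]
      have h6 : θ - (a + b) / 2 < -((b - a) / 6) := by linarith
      calc Real.pi / (b - a) * (θ - (a + b) / 2)
          < Real.pi / (b - a) * (-((b - a) / 6)) :=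
            mul_lt_mul_of_pos_left h6 (by positivity)
        _ = -(Real.pi / 6) := by field_simp
    have hmem1 : -(Real.pi / 6) ∈ Set.Icc (-(Real.pi / 2)) (Real.pi / 2) := by
      constructor <;> nlinarith
    have hmem2 : x ∈ Set.Icc (-(Real.pi / 2)) (Real.pi / 2) := ⟨hxlo, hxhi⟩
    have hmono := Real.strictMonoOn_sin hmem2 hmem1 hxlt
    rw [Real.sin_neg, Real.sin_pi_div_six] at hmono
    have := abs_lt.mp hkey
    linarith [this.1]
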